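/- For bounded operators X, Y on a complex Hilbert space H, let M = [[0, X],[Y*, 0]] on H ⊕ H. Then 2·w(M) = sup over θ ∈ ℝ of ‖X + e^{iθ} Y‖, where w is the numerical radius. -/

import Mathlib

open scoped ComplexOrder InnerProductSpace
open ContinuousLinearMap (adjoint)

variable {H K : Type*} [NormedAddCommGroup H] [InnerProductSpace ℂ H] [CompleteSpace H]
  [NormedAddCommGroup K] [InnerProductSpace ℂ K] [CompleteSpace K]

/-- The numerical radius of a bounded operator. -/
noncomputable def numRad {E : Type*} [NormedAddCommGroup E] [InnerProductSpace ℂ E]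
    (T : E →L[ℂ] E) : ℝ :=
  ⨆ x : {x : E // ‖x‖ = 1}, ‖(inner ℂ (T x.1) x.1 : ℂ)‖

lemma exists_sq_eq' (w : ℂ) (hw : ‖w‖ = 1) : ∃ s : ℂ, ‖s‖ = 1 ∧ s ^ 2 = w := by
  refine ⟨Complex.exp (w.arg / 2 * Complex.I), by simp [Complex.norm_exp], ?_⟩
  rw [← Complex.exp_nat_mul]
  push_cast
  rw [show (2 : ℂ) * (w.arg / 2 * Complex.I) = w.arg * Complex.I by ring]
  conv_rhs => rw [← Complex.norm_mul_exp_arg_mul_I w]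
  rw [hw]; simp

lemma bddAbove_numRad' {E : Type*} [NormedAddCommGroup E] [InnerProductSpace ℂ E]
    (T : E →L[ℂ] E) :
    BddAbove (Set.range fun x : {x : E // ‖x‖ = 1} => ‖(inner ℂ (T x.1) x.1 : ℂ)‖) := by
  refine ⟨‖T‖, ?_⟩
  rintro _ ⟨x, rfl⟩
  calc ‖(inner ℂ (T x.1) x.1 : ℂ)‖ ≤ ‖T x.1‖ * ‖x.1‖ := norm_inner_le_norm _ _
    _ ≤ ‖T‖ * ‖x.1‖ * ‖x.1‖ := by
        have := T.le_opNorm x.1; nlinarith [norm_nonneg (T x.1), norm_nonneg x.1]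
    _ = ‖T‖ := by rw [x.2]; ring

lemma numRad_nonneg' {E : Type*} [NormedAddCommGroup E] [InnerProductSpace ℂ E]
    (T : E →L[ℂ] E) : 0 ≤ numRad T :=
  Real.iSup_nonneg fun _ => norm_nonneg _

lemma le_numRad' {E : Type*} [NormedAddCommGroup E] [InnerProductSpace ℂ E]
    (T : E →L[ℂ] E) (x : {x : E // ‖x‖ = 1}) : ‖(inner ℂ (T x.1) x.1 : ℂ)‖ ≤ numRad T :=
  le_ciSup (bddAbove_numRad' T) x

set_option maxHeartbeats 1000000 in
theorem two_numRad_offdiag (X Y : H →L[ℂ] H)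
    (M : WithLp 2 (H × H) →L[ℂ] WithLp 2 (H × H))
    (hM : ∀ u v : H, M ((WithLp.equiv 2 (H × H)).symm (u, v)) =
      (WithLp.equiv 2 (H × H)).symm (X v, adjoint Y u)) :
    2 * numRad M = ⨆ θ : ℝ, ‖X + Complex.exp (θ * Complex.I) • Y‖ := by
  set S := ⨆ θ : ℝ, ‖X + Complex.exp (θ * Complex.I) • Y‖ with hS
  have hinner : ∀ u v : H,
      (inner ℂ (M ((WithLp.equiv 2 (H × H)).symm (u, v))) ((WithLp.equiv 2 (H × H)).symm (u, v)) : ℂ)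
      = ⟪X v, u⟫_ℂ + ⟪u, Y v⟫_ℂ := by
    intro u v
    rw [hM]
    simp only [WithLp.prod_inner_apply, WithLp.equiv_symm_apply, WithLp.ofLp_fst, WithLp.ofLp_snd, WithLp.toLp_fst, WithLp.toLp_snd]
    rw [ContinuousLinearMap.adjoint_inner_left]
  have hnormp : ∀ u v : H,
      ‖(WithLp.equiv 2 (H × H)).symm (u, v)‖ = Real.sqrt (‖u‖ ^ 2 + ‖v‖ ^ 2) := by
    intro u v
    rw [WithLp.prod_norm_eq_of_L2]
    simp only [WithLp.equiv_symm_apply, WithLp.toLp_fst, WithLp.toLp_snd]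
  have hbddR : BddAbove (Set.range fun θ : ℝ => ‖X + Complex.exp (θ * Complex.I) • Y‖) := by
    refine ⟨‖X‖ + ‖Y‖, ?_⟩
    rintro _ ⟨θ, rfl⟩
    calc ‖X + Complex.exp (θ * Complex.I) • Y‖
        ≤ ‖X‖ + ‖Complex.exp (θ * Complex.I) • Y‖ := norm_add_le _ _
      _ = ‖X‖ + ‖Y‖ := by
          rw [norm_smul, Complex.norm_exp]
          simp
  have hSnn : 0 ≤ S := by
    have h0 := le_ciSup hbddR (0 : ℝ)
    have := norm_nonneg (X + Complex.exp ((0:ℝ) * Complex.I) • Y)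
    rw [← hS] at h0
    linarith
  -- Key inequality
  have key : ∀ (u v : H), ‖u‖ = 1 → ‖v‖ = 1 → ∀ c : ℂ, ‖c‖ = 1 →
      ‖⟪X v, u⟫_ℂ + c * ⟪Y v, u⟫_ℂ‖ ≤ 2 * numRad M := by
    intro u v hu hv c hc
    set a : ℂ := ⟪X v, u⟫_ℂ with ha
    set b : ℂ := ⟪Y v, u⟫_ℂ with hb
    set w : ℂ := if b = 0 then 1 else (starRingEnd ℂ) c * (starRingEnd ℂ) b / b with hw
    have hwabs : ‖w‖ = 1 := by
      rw [hw]
      split_ifs with h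
      · simp
      · rw [norm_div, norm_mul]
        simp [Complex.norm_conj, hc, h, div_self]
    obtain ⟨s, hs1, hs2⟩ := exists_sq_eq' w hwabs
    have hss : (starRingEnd ℂ) s * s = 1 := by
      rw [mul_comm, Complex.mul_conj]
      norm_cast
      rw [Complex.normSq_eq_norm_sq, hs1]; norm_num
    set ξ : WithLp 2 (H × H) :=
      ((Real.sqrt 2 : ℝ) : ℂ)⁻¹ • (WithLp.equiv 2 (H × H)).symm (s • u, v) with hξ
    have hsu : ‖s • u‖ = 1 := by
      rw [norm_smul, hs1, hu]; ring
    have hξnorm : ‖ξ‖ = 1 := by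
      rw [hξ, norm_smul, hnormp, hsu, hv]
      have h2 : (0:ℝ) < Real.sqrt 2 := Real.sqrt_pos.2 (by norm_num)
      rw [norm_inv, Complex.norm_real, Real.norm_eq_abs, abs_of_pos h2]
      rw [show (1:ℝ)^2 + 1^2 = 2 by norm_num]
      field_simp
    have hconjb : ⟪u, Y v⟫_ℂ = (starRingEnd ℂ) b := by
      rw [hb]; exact inner_conj_symm (𝕜 := ℂ) u (Y v) ▸ rfl
    have hMξ : (inner ℂ (M ξ) ξ : ℂ)
        = (2:ℂ)⁻¹ * (s * a + (starRingEnd ℂ) s * (starRingEnd ℂ) b) := by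
      rw [hξ, map_smul, inner_smul_left, inner_smul_right, hinner,
        inner_smul_right, inner_smul_left, hconjb, ← ha,
        Complex.conj_inv, Complex.conj_ofReal, ← mul_assoc, ← mul_inv]
      norm_cast
      rw [Real.mul_self_sqrt (by norm_num : (0:ℝ) ≤ 2)]
      norm_num
    have hval : s * a + (starRingEnd ℂ) s * (starRingEnd ℂ) b = s * (a + c * b) := by
      by_cases hb0 : b = 0
      · rw [hb0]; simp
      · have hconj2 : ((starRingEnd ℂ) s) ^ 2 = (starRingEnd ℂ) w := by
          rw [← map_pow, hs2]
        have hwc : (starRingEnd ℂ) w = c * b / (starRingEnd ℂ) b := by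
          rw [hw, if_neg hb0, map_div₀, map_mul, Complex.conj_conj, Complex.conj_conj]
        have hbbar : (starRingEnd ℂ) b ≠ 0 := by simpa using hb0
        have h3 : ((starRingEnd ℂ) s) ^ 2 * (starRingEnd ℂ) b = c * b := by
          rw [hconj2, hwc]; field_simp
        linear_combination s * h3 - (starRingEnd ℂ) s * (starRingEnd ℂ) b * hss
    have h2 : ‖(inner ℂ (M ξ) ξ : ℂ)‖ = 2⁻¹ * ‖a + c * b‖ := by
      rw [hMξ, hval, norm_mul, norm_mul]
      simp [hs1]
    have h4 := le_numRad' M ⟨ξ, hξnorm⟩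
    simp only at h4
    rw [h2] at h4
    linarith
  -- Direction 1: S ≤ 2 * numRad M
  have dir1 : S ≤ 2 * numRad M := by
    rw [hS]
    refine Real.iSup_le (fun θ => ?_) (by have := numRad_nonneg' M; linarith)
    set c : ℂ := Complex.exp (θ * Complex.I) with hc
    have hcabs : ‖c‖ = 1 := by rw [hc, Complex.norm_exp]; simp
    refine ContinuousLinearMap.opNorm_le_bound _ (by have := numRad_nonneg' M; linarith) fun v => ?_
    by_cases hTv : (X + c • Y) v = 0
    · rw [hTv, norm_zero]
      have := numRad_nonneg' M
      positivity
    · have hvne : v ≠ 0 := by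
        intro h; apply hTv; rw [h]; simp
      have hvn : ‖v‖ ≠ 0 := norm_ne_zero_iff.2 hvne
      set v' : H := ((‖v‖ : ℝ) : ℂ)⁻¹ • v with hv'
      have hv'n : ‖v'‖ = 1 := by
        rw [hv', norm_smul, norm_inv, Complex.norm_real, Real.norm_eq_abs,
          abs_of_nonneg (norm_nonneg v)]
        exact inv_mul_cancel₀ hvn
      have hTv' : (X + c • Y) v' ≠ 0 := by
        rw [hv', map_smul]
        exact smul_ne_zero (by simpa using hvn) hTv
      have hTn : ‖(X + c • Y) v'‖ ≠ 0 := norm_ne_zero_iff.2 hTv'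
      set u : H := ((‖(X + c • Y) v'‖ : ℝ) : ℂ)⁻¹ • (X + c • Y) v' with hu
      have hun : ‖u‖ = 1 := by
        rw [hu, norm_smul, norm_inv, Complex.norm_real, Real.norm_eq_abs,
          abs_of_nonneg (norm_nonneg _)]
        exact inv_mul_cancel₀ hTn
      have hTnc : ((‖(X + c • Y) v'‖ : ℝ) : ℂ) ≠ 0 := by exact_mod_cast hTn
      have hinner2 : ⟪(X + c • Y) v', u⟫_ℂ = ((‖(X + c • Y) v'‖ : ℝ) : ℂ) := by
        rw [hu, inner_smul_right, inner_self_eq_norm_sq_to_K, sq, ← mul_assoc]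
        field_simp
        rfl
      have hsplit : ⟪(X + c • Y) v', u⟫_ℂ
          = ⟪X v', u⟫_ℂ + (starRingEnd ℂ) c * ⟪Y v', u⟫_ℂ := by
        simp [inner_add_left, inner_smul_left]; ring
      have hkey := key u v' hun hv'n ((starRingEnd ℂ) c) (by simp [Complex.norm_conj, hcabs])
      rw [← hsplit, hinner2] at hkey
      have hnorms : ‖((‖(X + c • Y) v'‖ : ℝ) : ℂ)‖ = ‖(X + c • Y) v'‖ := by
        rw [Complex.norm_real, Real.norm_eq_abs, abs_of_nonneg (norm_nonneg _)]
      rw [hnorms] at hkey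
      have hTvv : (X + c • Y) v = ((‖v‖ : ℝ) : ℂ) • (X + c • Y) v' := by
        rw [hv', map_smul, smul_smul, mul_inv_cancel₀ (by exact_mod_cast hvn), one_smul]
      rw [hTvv, norm_smul, Complex.norm_real, Real.norm_eq_abs, abs_of_nonneg (norm_nonneg v)]
      rw [mul_comm (2 * numRad M) ‖v‖]
      exact mul_le_mul_of_nonneg_left hkey (norm_nonneg v)
  -- Direction 2: 2 * numRad M ≤ S
  have dir2 : 2 * numRad M ≤ S := by
    have : numRad M ≤ S / 2 := by
      refine Real.iSup_le (fun ξ => ?_) (by linarith)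
      set p : H × H := WithLp.equiv 2 (H × H) ξ.1 with hp
      have hξp : ξ.1 = (WithLp.equiv 2 (H × H)).symm (p.1, p.2) := by
        rw [hp, Prod.mk.eta, Equiv.symm_apply_apply]
      set a : ℂ := ⟪X p.2, p.1⟫_ℂ with ha
      set b : ℂ := ⟪Y p.2, p.1⟫_ℂ with hb
      set w : ℂ := if b = 0 then 1 else b / (starRingEnd ℂ) b with hw
      have hwabs : ‖w‖ = 1 := by
        rw [hw]; split_ifs with h
        · simp
        · rw [norm_div]
          simp [Complex.norm_conj, h, div_self]
      have hwexp : Complex.exp ((w.arg : ℂ) * Complex.I) = w := by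
        conv_rhs => rw [← Complex.norm_mul_exp_arg_mul_I w]
        rw [hwabs]; simp
      have hcb : (starRingEnd ℂ) w * b = (starRingEnd ℂ) b := by
        rw [hw]; split_ifs with h
        · rw [h]; simp
        · rw [map_div₀, Complex.conj_conj]
          field_simp
      have hMval : (inner ℂ (M ξ.1) ξ.1 : ℂ) = a + (starRingEnd ℂ) b := by
        conv_lhs => rw [hξp]
        rw [hinner, ← ha, ← inner_conj_symm, ← hb]
      have hXY : ⟪(X + w • Y) p.2, p.1⟫_ℂ = a + (starRingEnd ℂ) b := by
        simp only [ContinuousLinearMap.add_apply, ContinuousLinearMap.smul_apply,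
          inner_add_left, inner_smul_left, ← ha, ← hb, hcb]
      have hpn : ‖p.1‖ ^ 2 + ‖p.2‖ ^ 2 = 1 := by
        have h1 := WithLp.prod_norm_sq_eq_of_L2 ξ.1
        rw [ξ.2] at h1
        rw [hp]
        simp only [WithLp.equiv_apply, WithLp.ofLp_fst, WithLp.ofLp_snd]
        nlinarith [h1]
      have hprod : ‖p.2‖ * ‖p.1‖ ≤ 1 / 2 := by
        nlinarith [norm_nonneg p.1, norm_nonneg p.2, sq_nonneg (‖p.1‖ - ‖p.2‖)]
      have hb1 : ‖(inner ℂ (M ξ.1) ξ.1 : ℂ)‖ ≤ ‖X + w • Y‖ * (‖p.2‖ * ‖p.1‖) := by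
        rw [hMval, ← hXY]
        calc ‖⟪(X + w • Y) p.2, p.1⟫_ℂ‖ ≤ ‖(X + w • Y) p.2‖ * ‖p.1‖ := norm_inner_le_norm _ _
          _ ≤ ‖X + w • Y‖ * ‖p.2‖ * ‖p.1‖ := by
              have := (X + w • Y).le_opNorm p.2
              nlinarith [norm_nonneg p.1]
          _ = ‖X + w • Y‖ * (‖p.2‖ * ‖p.1‖) := by ring
      have hle : ‖X + w • Y‖ ≤ S := by
        have := le_ciSup hbddR w.arg
        rw [← hS] at this
        rwa [hwexp] at this
      have hNnn : (0:ℝ) ≤ ‖X + w • Y‖ := norm_nonneg _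
      calc ‖(inner ℂ (M ξ.1) ξ.1 : ℂ)‖ ≤ ‖X + w • Y‖ * (‖p.2‖ * ‖p.1‖) := hb1
        _ ≤ ‖X + w • Y‖ * (1/2) := by
            apply mul_le_mul_of_nonneg_left hprod hNnn
        _ ≤ S / 2 := by linarith
    linarith
  linarith
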